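/- Let δ ∈ (0,1) and let K̃: [0,1] → Sym_n(ℝ) be continuous. For ε ∈ [0,1] let C_ε: [0,1] → Sym_n(ℝ) be continuous with sup_t ‖C_ε(t)‖ ≤ ε, and set K̃_ε(t) = K̃(t) + C_ε(t)/(1−t)^δ. Let N_ε solve N_ε'(t) = K̃_ε(t)N_ε(t), N_ε(0) = I on [0,1). Then lim_{t→1} N_ε(t) exists, sup_{0≤t<1} ‖N_ε(t)‖ < ∞, and there is a constant C independent of ε such that sup_{0≤t<1} ‖N_ε(t) − N₀(t)‖ ≤ Cε for all sufficiently small ε. -/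

import Mathlib

attribute [local instance] Matrix.normedAddCommGroup Matrix.normedSpace

open Set MeasureTheory intervalIntegral

instance matENormedAddMonoid (n : ℕ) : ENormedAddMonoid (Matrix (Fin n) (Fin n) ℝ) :=
  NormedAddCommGroup.toENormedAddCommMonoid.toENormedAddMonoid

instance matPseudoMetrizable (n : ℕ) :
    TopologicalSpace.PseudoMetrizableSpace (Matrix (Fin n) (Fin n) ℝ) :=
  inferInstanceAs (TopologicalSpace.PseudoMetrizableSpace (Fin n → Fin n → ℝ))

lemma mat_mul_norm_le {n : ℕ} (A B : Matrix (Fin n) (Fin n) ℝ) :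
    ‖A * B‖ ≤ n * ‖A‖ * ‖B‖ := by
  have h : (0:ℝ) ≤ n * ‖A‖ * ‖B‖ := by positivity
  rw [Matrix.norm_le_iff h]
  intro i j
  have : (A * B) i j = ∑ k, A i k * B k j := by simp [Matrix.mul_apply]
  rw [this]
  calc ‖∑ k, A i k * B k j‖ ≤ ∑ k : Fin n, ‖A i k * B k j‖ := norm_sum_le _ _
    _ ≤ ∑ k : Fin n, ‖A‖ * ‖B‖ := by
        refine Finset.sum_le_sum fun k _ => ?_
        rw [norm_mul]
        exact mul_le_mul (Matrix.norm_entry_le_entrywise_sup_norm A)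
          (Matrix.norm_entry_le_entrywise_sup_norm B) (norm_nonneg _) (norm_nonneg _)
    _ = n * ‖A‖ * ‖B‖ := by simp [mul_assoc]

lemma norm_one_mat_le {n : ℕ} : ‖(1 : Matrix (Fin n) (Fin n) ℝ)‖ ≤ 1 := by
  rw [Matrix.norm_le_iff zero_le_one]
  intro i j
  rw [Matrix.one_apply]
  split <;> simp

lemma contOn_matrix_mul {n : ℕ} {X Y : ℝ → Matrix (Fin n) (Fin n) ℝ} {s : Set ℝ}
    (hX : ContinuousOn X s) (hY : ContinuousOn Y s) :
    ContinuousOn (fun x => X x * Y x) s := by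
  have h : Continuous (fun p : Matrix (Fin n) (Fin n) ℝ × Matrix (Fin n) (Fin n) ℝ =>
      p.1 * p.2) := Continuous.matrix_mul continuous_fst continuous_snd
  exact h.comp_continuousOn (hX.prodMk hY)

/-- Gronwall's inequality, integral form, time-dependent coefficient. -/
lemma gronwall_int {u a : ℝ → ℝ} (hu : Continuous u) (ha : Continuous a)
    (ha0 : ∀ s, 0 ≤ a s) {c b : ℝ}
    (hineq : ∀ t ∈ Set.Icc (0:ℝ) b, u t ≤ c + ∫ s in (0:ℝ)..t, a s * u s) :
    ∀ t ∈ Set.Icc (0:ℝ) b, u t ≤ c * Real.exp (∫ s in (0:ℝ)..t, a s) := by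
  set v : ℝ → ℝ := fun t => c + ∫ s in (0:ℝ)..t, a s * u s with hv
  set ψ : ℝ → ℝ := fun t => ∫ s in (0:ℝ)..t, a s with hψ
  have hau : Continuous fun s => a s * u s := ha.mul hu
  have hv' : ∀ t : ℝ, HasDerivAt v (a t * u t) t := by
    intro t
    refine HasDerivAt.const_add _ ?_
    exact integral_hasDerivAt_right (hau.intervalIntegrable _ _)
      (hau.stronglyMeasurableAtFilter _ _) hau.continuousAt
  have hψ' : ∀ t : ℝ, HasDerivAt ψ (a t) t := by
    intro t
    exact integral_hasDerivAt_right (ha.intervalIntegrable _ _)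
      (ha.stronglyMeasurableAtFilter _ _) ha.continuousAt
  set w : ℝ → ℝ := fun t => Real.exp (-ψ t) * v t with hw
  have hw' : ∀ t : ℝ, HasDerivAt w (Real.exp (-ψ t) * (a t * (u t - v t))) t := by
    intro t
    have h1 : HasDerivAt (fun t => Real.exp (-ψ t)) (Real.exp (-ψ t) * (-a t)) t :=
      (((hψ' t).neg).exp)
    have := (h1.mul (hv' t))
    exact this.congr_deriv (by ring)
  have hψc : Continuous ψ := continuous_iff_continuousAt.mpr fun x => (hψ' x).continuousAt
  have hvc : Continuous v := continuous_iff_continuousAt.mpr fun x => (hv' x).continuousAt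
  have hwcont : Continuous w := (hψc.neg.rexp).mul hvc
  have hwanti : AntitoneOn w (Set.Icc 0 b) := by
    refine antitoneOn_of_deriv_nonpos (convex_Icc 0 b) hwcont.continuousOn
      (fun x _ => (hw' x).differentiableAt.differentiableWithinAt) ?_
    intro x hx
    rw [(hw' x).deriv]
    have hx' : x ∈ Set.Icc (0:ℝ) b := interior_subset hx
    have h1 : u x - v x ≤ 0 := sub_nonpos.mpr (hineq x hx')
    exact mul_nonpos_of_nonneg_of_nonpos (Real.exp_pos _).le
      (mul_nonpos_of_nonneg_of_nonpos (ha0 x) h1)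
  intro t ht
  have h0b : (0:ℝ) ≤ b := ht.1.trans ht.2
  have h1 : w t ≤ w 0 := hwanti (Set.left_mem_Icc.mpr h0b) ht ht.1
  have hw0 : w 0 = c := by simp [hw, hψ, hv]
  have h2 : Real.exp (-ψ t) * v t ≤ c := hw0 ▸ h1
  have h3 : v t ≤ c * Real.exp (ψ t) := by
    have h4 := mul_le_mul_of_nonneg_right h2 (Real.exp_pos (ψ t)).le
    rwa [mul_right_comm, ← Real.exp_add, neg_add_cancel, Real.exp_zero, one_mul] at h4
  exact (hineq t ht).trans h3

/-- Perturbation estimate for linear ODEs with an integrable singularity `(1−t)^{−δ}`,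
`0 < δ < 1`: if `N_ε` solves `N_ε' = (K̃ + (1−t)^{−δ} C_ε) N_ε`, `N_ε(0) = I`, with `K̃`,
`C_ε` continuous symmetric and `‖C_ε(t)‖ ≤ ε`, then each `N_ε` is bounded on `[0,1)` with
a limit at `t = 1`, and `sup_{0≤t<1} ‖N_ε(t) − N₀(t)‖ ≤ Cε` for sufficiently small `ε`,
with `C` independent of `ε`. -/
theorem singular_ode_perturbation (n : ℕ) (δ : ℝ) (hδ0 : 0 < δ) (hδ1 : δ < 1)
    (Ktil : ℝ → Matrix (Fin n) (Fin n) ℝ)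
    (hKsymm : ∀ t ∈ Set.Icc (0:ℝ) 1, (Ktil t).IsSymm)
    (hKcont : ∀ i j, Continuous fun t => Ktil t i j)
    (C : ℝ → ℝ → Matrix (Fin n) (Fin n) ℝ)
    (hCsymm : ∀ ε ∈ Set.Icc (0:ℝ) 1, ∀ t ∈ Set.Icc (0:ℝ) 1, (C ε t).IsSymm)
    (hCcont : ∀ ε ∈ Set.Icc (0:ℝ) 1, ∀ i j, Continuous fun t => C ε t i j)
    (hCbdd : ∀ ε ∈ Set.Icc (0:ℝ) 1, ∀ t ∈ Set.Icc (0:ℝ) 1, ‖C ε t‖ ≤ ε)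
    (Nf : ℝ → ℝ → Matrix (Fin n) (Fin n) ℝ)
    (hN0 : ∀ ε ∈ Set.Icc (0:ℝ) 1, Nf ε 0 = 1)
    (hN : ∀ ε ∈ Set.Icc (0:ℝ) 1, ∀ t ∈ Set.Ico (0:ℝ) 1,
      HasDerivWithinAt (Nf ε)
        ((Ktil t + ((1 - t) ^ (-δ) : ℝ) • C ε t) * Nf ε t) (Set.Ico 0 1) t) :
    (∀ ε ∈ Set.Icc (0:ℝ) 1,
      (∃ L, Filter.Tendsto (Nf ε) (nhdsWithin 1 (Set.Iio 1)) (nhds L))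
      ∧ ∃ B : ℝ, ∀ t ∈ Set.Ico (0:ℝ) 1, ‖Nf ε t‖ ≤ B)
    ∧ ∃ Cc > (0:ℝ), ∃ ε₀ > (0:ℝ), ∀ ε, 0 ≤ ε → ε ≤ ε₀ → ε ≤ 1 →
        ∀ t ∈ Set.Ico (0:ℝ) 1, ‖Nf ε t - Nf 0 t‖ ≤ Cc * ε := by
  -- basic continuity
  have hKc : Continuous Ktil := continuous_matrix hKcont
  have hCc : ∀ ε ∈ Set.Icc (0:ℝ) 1, Continuous (C ε) :=
    fun ε hε => continuous_matrix (hCcont ε hε)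
  -- bound for Ktil
  obtain ⟨M₀, hM₀⟩ := isCompact_Icc.exists_bound_of_continuousOn
    (hKc.continuousOn (s := Set.Icc (0:ℝ) 1))
  set M : ℝ := max M₀ 0 with hMdef
  have hM0 : (0:ℝ) ≤ M := le_max_right _ _
  have hM : ∀ t ∈ Set.Icc (0:ℝ) 1, ‖Ktil t‖ ≤ M :=
    fun t ht => (hM₀ t ht).trans (le_max_left _ _)
  -- the singular weight
  set g : ℝ → ℝ := fun s => (1 - s) ^ (-δ) with hgdef
  have hδne : (1:ℝ) - δ ≠ 0 := by linarith
  have hg_pos : ∀ s : ℝ, s < 1 → 0 < g s := fun s hs =>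
    Real.rpow_pos_of_pos (by linarith) _
  have hg_contOn : ContinuousOn g (Set.Iio (1:ℝ)) := by
    refine ContinuousOn.rpow_const (by fun_prop) ?_
    intro x hx
    exact Or.inl (by simp only [Set.mem_Iio] at hx; intro h; linarith)
  have hg_int : IntervalIntegrable g volume 0 1 := by
    have h1 : IntervalIntegrable (fun x : ℝ => x ^ (-δ)) volume 0 1 :=
      intervalIntegrable_rpow' (by linarith)
    have h2 := h1.comp_sub_left 1
    simpa using h2.symm
  -- the integral bound for g
  have hg_ibound : ∀ t ∈ Set.Ico (0:ℝ) 1, (∫ s in (0:ℝ)..t, g s) ≤ 1 / (1 - δ) := by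
    intro t ht
    set G : ℝ → ℝ := fun s => -(1 - δ)⁻¹ * (1 - s) ^ (1 - δ) with hGdef
    have hG : ∀ s ∈ Set.uIcc (0:ℝ) t, HasDerivAt G (g s) s := by
      intro s hs
      rw [Set.uIcc_of_le ht.1] at hs
      have hs1 : (1:ℝ) - s > 0 := by
        have := hs.2
        have := ht.2
        linarith
      have h1 : HasDerivAt (fun s : ℝ => 1 - s) (-1) s := by
        simpa using (hasDerivAt_id s).const_sub 1
      have h2 := h1.rpow_const (p := 1 - δ) (Or.inl (ne_of_gt hs1))
      have h3 := h2.const_mul (-(1 - δ)⁻¹)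
      refine HasDerivAt.congr_deriv h3 (Eq.symm ?_)
      have he : (1:ℝ) - δ - 1 = -δ := by ring
      rw [he]
      field_simp [hgdef]
      ring
    have hgi : IntervalIntegrable g volume 0 t :=
      hg_int.mono_set (by
        rw [Set.uIcc_of_le ht.1, Set.uIcc_of_le zero_le_one]
        exact Set.Icc_subset_Icc le_rfl ht.2.le)
    have := intervalIntegral.integral_eq_sub_of_hasDerivAt hG hgi
    rw [this]
    have h1t : (0:ℝ) ≤ (1 - t) ^ (1 - δ) := Real.rpow_nonneg (by linarith [ht.2]) _
    have h10 : ((1:ℝ) - 0) ^ (1 - δ) = 1 := by norm_num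
    rw [hGdef]
    simp only [h10]
    have hd : (0:ℝ) < 1 - δ := by linarith
    rw [div_eq_mul_inv, one_mul]
    nlinarith [inv_pos.mpr hd]
  -- continuity of solutions and integrands
  have hNc : ∀ ε ∈ Set.Icc (0:ℝ) 1, ContinuousOn (Nf ε) (Set.Ico 0 1) :=
    fun ε hε t ht => (hN ε hε t ht).continuousWithinAt
  have hAc : ∀ ε ∈ Set.Icc (0:ℝ) 1,
      ContinuousOn (fun s => Ktil s + g s • C ε s) (Set.Ico (0:ℝ) 1) := by
    intro ε hε
    refine (hKc.continuousOn).add ?_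
    exact (hg_contOn.mono (Set.Ico_subset_Iio_self)).smul ((hCc ε hε).continuousOn)
  have hFc : ∀ ε ∈ Set.Icc (0:ℝ) 1,
      ContinuousOn (fun s => (Ktil s + g s • C ε s) * Nf ε s) (Set.Ico (0:ℝ) 1) :=
    fun ε hε => contOn_matrix_mul (hAc ε hε) (hNc ε hε)
  -- fundamental theorem of calculus
  have hFTC : ∀ ε ∈ Set.Icc (0:ℝ) 1, ∀ t ∈ Set.Ico (0:ℝ) 1,
      Nf ε t = 1 + ∫ s in (0:ℝ)..t, (Ktil s + g s • C ε s) * Nf ε s := by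
    intro ε hε t ht
    have hsub : Set.Icc (0:ℝ) t ⊆ Set.Ico (0:ℝ) 1 :=
      fun s hs => ⟨hs.1, lt_of_le_of_lt hs.2 ht.2⟩
    have hint : IntervalIntegrable (fun s => (Ktil s + g s • C ε s) * Nf ε s) volume 0 t := by
      apply ContinuousOn.intervalIntegrable
      rw [Set.uIcc_of_le ht.1]
      exact (hFc ε hε).mono hsub
    have heq := intervalIntegral.integral_eq_sub_of_hasDeriv_right_of_le ht.1
      ((hNc ε hε).mono hsub)
      (fun x hx => by
        have hx' : x ∈ Set.Ico (0:ℝ) 1 := ⟨hx.1.le, lt_of_lt_of_le hx.2 ht.2.le⟩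
        have h1 : HasDerivAt (Nf ε) ((Ktil x + g x • C ε x) * Nf ε x) x := by
          refine (hN ε hε x hx').hasDerivAt ?_
          exact Filter.mem_of_superset (Ioo_mem_nhds (by linarith [hx.1]) hx'.2)
            Set.Ioo_subset_Ico_self
        exact h1.hasDerivWithinAt) hint
    rw [hN0 ε hε] at heq
    rw [heq]
    abel
  -- uniform bound on solutions
  set B : ℝ := Real.exp ((n : ℝ) * (M + 1 / (1 - δ))) with hBdef
  have hBpos : 0 < B := Real.exp_pos _
  have hbound : ∀ ε ∈ Set.Icc (0:ℝ) 1, ∀ t ∈ Set.Ico (0:ℝ) 1, ‖Nf ε t‖ ≤ B := by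
    intro ε hε t ht
    have hsub : Set.Icc (0:ℝ) t ⊆ Set.Ico (0:ℝ) 1 :=
      fun s hs => ⟨hs.1, lt_of_le_of_lt hs.2 ht.2⟩
    set clamp : ℝ → ℝ := fun s => max 0 (min s t) with hclampdef
    have hclamp_mem : ∀ s, clamp s ∈ Set.Icc (0:ℝ) t :=
      fun s => ⟨le_max_left _ _, max_le ht.1 (min_le_right s t)⟩
    have hclamp_id : ∀ s ∈ Set.Icc (0:ℝ) t, clamp s = s := by
      intro s hs
      rw [hclampdef]
      simp only
      rw [min_eq_left hs.2, max_eq_right hs.1]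
    have hclamp_cont : Continuous clamp :=
      continuous_const.max (continuous_id.min continuous_const)
    set u : ℝ → ℝ := fun s => ‖Nf ε (clamp s)‖ with hudef
    have hu : Continuous u :=
      ((hNc ε hε).comp_continuous hclamp_cont fun s => hsub (hclamp_mem s)).norm
    set af : ℝ → ℝ := fun s => (n:ℝ) * (M + (1 - min s t) ^ (-δ)) with hafdef
    have hbase : ∀ s : ℝ, (0:ℝ) < 1 - min s t := by
      intro s
      have : min s t ≤ t := min_le_right _ _
      linarith [ht.2]
    have ha : Continuous af := by
      refine continuous_const.mul (continuous_const.add ?_)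
      exact (continuous_const.sub (continuous_id.min continuous_const)).rpow_const
        fun x => Or.inl (ne_of_gt (hbase x))
    have ha0 : ∀ s, 0 ≤ af s := by
      intro s
      have := Real.rpow_pos_of_pos (hbase s) (-δ)
      positivity
    have hAnorm : ∀ s ∈ Set.Icc (0:ℝ) t, ‖Ktil s + g s • C ε s‖ ≤ M + g s := by
      intro s hs
      have hs1 : s ∈ Set.Icc (0:ℝ) 1 := ⟨hs.1, (hs.2.trans ht.2.le)⟩
      have hgs : 0 ≤ g s := (hg_pos s (lt_of_le_of_lt hs.2 ht.2)).le
      calc ‖Ktil s + g s • C ε s‖ ≤ ‖Ktil s‖ + ‖g s • C ε s‖ := norm_add_le _ _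
        _ ≤ M + g s := by
            refine add_le_add (hM s hs1) ?_
            rw [norm_smul, Real.norm_eq_abs, abs_of_nonneg hgs]
            calc g s * ‖C ε s‖ ≤ g s * ε := mul_le_mul_of_nonneg_left (hCbdd ε hε s hs1) hgs
              _ ≤ g s * 1 := mul_le_mul_of_nonneg_left hε.2 hgs
              _ = g s := mul_one _
    have hFnorm : ∀ s ∈ Set.Icc (0:ℝ) t, ‖(Ktil s + g s • C ε s) * Nf ε s‖ ≤ af s * u s := by
      intro s hs
      have hmin : min s t = s := min_eq_left hs.2
      have hus : u s = ‖Nf ε s‖ := by rw [hudef]; simp only; rw [hclamp_id s hs]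
      rw [hus, hafdef]
      simp only [hmin]
      calc ‖(Ktil s + g s • C ε s) * Nf ε s‖
          ≤ (n:ℝ) * ‖Ktil s + g s • C ε s‖ * ‖Nf ε s‖ := mat_mul_norm_le _ _
        _ ≤ (n:ℝ) * (M + (1 - s) ^ (-δ)) * ‖Nf ε s‖ := by
            refine mul_le_mul_of_nonneg_right ?_ (norm_nonneg _)
            exact mul_le_mul_of_nonneg_left (hAnorm s hs) (Nat.cast_nonneg n)
    have hineq : ∀ t' ∈ Set.Icc (0:ℝ) t, u t' ≤ 1 + ∫ s in (0:ℝ)..t', af s * u s := by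
      intro t' ht'
      have ht'1 : t' ∈ Set.Ico (0:ℝ) 1 := hsub ht'
      have hut' : u t' = ‖Nf ε t'‖ := by rw [hudef]; simp only; rw [hclamp_id t' ht']
      have hsub' : Set.Icc (0:ℝ) t' ⊆ Set.Icc (0:ℝ) t := Set.Icc_subset_Icc le_rfl ht'.2
      have hint1 : IntervalIntegrable (fun s => ‖(Ktil s + g s • C ε s) * Nf ε s‖)
          volume 0 t' := by
        apply ContinuousOn.intervalIntegrable
        rw [Set.uIcc_of_le ht'.1]
        exact (((hFc ε hε).mono (fun x hx => hsub (hsub' hx))).norm)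
      have hint2 : IntervalIntegrable (fun s => af s * u s) volume 0 t' :=
        (ha.mul hu).intervalIntegrable _ _
      rw [hut', hFTC ε hε t' ht'1]
      calc ‖(1 : Matrix (Fin n) (Fin n) ℝ) + ∫ s in (0:ℝ)..t', (Ktil s + g s • C ε s) * Nf ε s‖
          ≤ ‖(1 : Matrix (Fin n) (Fin n) ℝ)‖ +
            ‖∫ s in (0:ℝ)..t', (Ktil s + g s • C ε s) * Nf ε s‖ := norm_add_le _ _
        _ ≤ 1 + ∫ s in (0:ℝ)..t', ‖(Ktil s + g s • C ε s) * Nf ε s‖ :=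
            add_le_add norm_one_mat_le
              (intervalIntegral.norm_integral_le_integral_norm ht'.1)
        _ ≤ 1 + ∫ s in (0:ℝ)..t', af s * u s := by
            refine add_le_add_right ?_ 1
            exact intervalIntegral.integral_mono_on ht'.1 hint1 hint2
              fun s hs => hFnorm s (hsub' hs)
    have hgr := gronwall_int hu ha ha0 hineq t ⟨ht.1, le_rfl⟩
    have hut : u t = ‖Nf ε t‖ := by
      rw [hudef]; simp only; rw [hclamp_id t ⟨ht.1, le_rfl⟩]
    rw [hut] at hgr
    refine hgr.trans ?_
    rw [one_mul, hBdef]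
    apply Real.exp_le_exp.mpr
    have hcongr : (∫ s in (0:ℝ)..t, af s) = ∫ s in (0:ℝ)..t, (n:ℝ) * (M + g s) := by
      apply intervalIntegral.integral_congr
      intro s hs
      rw [Set.uIcc_of_le ht.1] at hs
      rw [hafdef]
      simp only [min_eq_left hs.2]
      rfl
    rw [hcongr]
    have hgi : IntervalIntegrable g volume 0 t :=
      hg_int.mono_set (by
        rw [Set.uIcc_of_le ht.1, Set.uIcc_of_le zero_le_one]
        exact Set.Icc_subset_Icc le_rfl ht.2.le)
    rw [intervalIntegral.integral_const_mul]
    rw [intervalIntegral.integral_add (intervalIntegrable_const) hgi]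
    rw [intervalIntegral.integral_const]
    have h1 : (t - 0) • M ≤ M := by
      simp only [sub_zero, smul_eq_mul]
      nlinarith [ht.2.le, ht.1]
    have h2 := hg_ibound t ht
    have : (t - 0) • M + ∫ s in (0:ℝ)..t, g s ≤ M + 1 / (1 - δ) := add_le_add h1 h2
    exact mul_le_mul_of_nonneg_left this (Nat.cast_nonneg n)
  -- global norm bounds
  have hgnn : ∀ s ∈ Set.Ico (0:ℝ) 1, 0 ≤ g s := fun s hs => (hg_pos s hs.2).le
  have hAnormG : ∀ ε ∈ Set.Icc (0:ℝ) 1, ∀ s ∈ Set.Ico (0:ℝ) 1,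
      ‖Ktil s + g s • C ε s‖ ≤ M + g s := by
    intro ε hε s hs
    have hs1 : s ∈ Set.Icc (0:ℝ) 1 := ⟨hs.1, hs.2.le⟩
    have hgs : 0 ≤ g s := hgnn s hs
    calc ‖Ktil s + g s • C ε s‖ ≤ ‖Ktil s‖ + ‖g s • C ε s‖ := norm_add_le _ _
      _ ≤ M + g s := by
          refine add_le_add (hM s hs1) ?_
          rw [norm_smul, Real.norm_eq_abs, abs_of_nonneg hgs]
          calc g s * ‖C ε s‖ ≤ g s * ε := mul_le_mul_of_nonneg_left (hCbdd ε hε s hs1) hgs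
            _ ≤ g s * 1 := mul_le_mul_of_nonneg_left hε.2 hgs
            _ = g s := mul_one _
  have hFnormG : ∀ ε ∈ Set.Icc (0:ℝ) 1, ∀ s ∈ Set.Ico (0:ℝ) 1,
      ‖(Ktil s + g s • C ε s) * Nf ε s‖ ≤ (n:ℝ) * (M + g s) * B := by
    intro ε hε s hs
    calc ‖(Ktil s + g s • C ε s) * Nf ε s‖
        ≤ (n:ℝ) * ‖Ktil s + g s • C ε s‖ * ‖Nf ε s‖ := mat_mul_norm_le _ _
      _ ≤ (n:ℝ) * (M + g s) * B := by
          have h1 : (n:ℝ) * ‖Ktil s + g s • C ε s‖ ≤ (n:ℝ) * (M + g s) :=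
            mul_le_mul_of_nonneg_left (hAnormG ε hε s hs) (Nat.cast_nonneg n)
          have h2 : (0:ℝ) ≤ (n:ℝ) * (M + g s) := by
            have := hgnn s hs
            positivity
          exact mul_le_mul h1 (hbound ε hε s hs) (norm_nonneg _) h2
  -- integrability of the dominating function
  have haf1 : IntervalIntegrable (fun s => (n:ℝ) * (M + g s) * B) volume 0 1 :=
    ((intervalIntegrable_const.add hg_int).const_mul _).mul_const _
  -- existence of the limit at 1
  have hlim : ∀ ε ∈ Set.Icc (0:ℝ) 1,
      ∃ L, Filter.Tendsto (Nf ε) (nhdsWithin 1 (Set.Iio 1)) (nhds L) := by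
    intro ε hε
    set F : ℝ → Matrix (Fin n) (Fin n) ℝ := fun s => (Ktil s + g s • C ε s) * Nf ε s with hFdef
    have hFint : IntervalIntegrable F volume 0 1 := by
      rw [intervalIntegrable_iff_integrableOn_Ioc_of_le zero_le_one,
        integrableOn_Ioc_iff_integrableOn_Ioo]
      have hmeas : AEStronglyMeasurable F (volume.restrict (Set.Ioo (0:ℝ) 1)) :=
        ((hFc ε hε).mono Set.Ioo_subset_Ico_self).aestronglyMeasurable measurableSet_Ioo
      have hdom : IntegrableOn (fun s => (n:ℝ) * (M + g s) * B) (Set.Ioo (0:ℝ) 1) volume := by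
        have := (intervalIntegrable_iff_integrableOn_Ioc_of_le
          (zero_le_one (α := ℝ))).mp haf1
        exact this.mono_set Set.Ioo_subset_Ioc_self
      refine hdom.integrable.mono' hmeas ?_
      refine (ae_restrict_iff' measurableSet_Ioo).2 (Filter.Eventually.of_forall ?_)
      exact fun s hs => hFnormG ε hε s (Set.mem_of_mem_of_subset hs Set.Ioo_subset_Ico_self)
    refine ⟨1 + ∫ s in (0:ℝ)..1, F s, ?_⟩
    set L : Matrix (Fin n) (Fin n) ℝ := 1 + ∫ s in (0:ℝ)..1, F s with hLdef
    set tail : ℝ → ℝ := fun x => ∫ s in (0:ℝ)..x, (n:ℝ) * (M + g s) * B with htaildef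
    have hIooIio : nhdsWithin (1:ℝ) (Set.Ioo (0:ℝ) 1) = nhdsWithin 1 (Set.Iio 1) :=
      nhdsWithin_Ioo_eq_nhdsLT zero_lt_one
    have hIoomem : Set.Ioo (0:ℝ) 1 ∈ nhdsWithin (1:ℝ) (Set.Iio 1) := by
      rw [← hIooIio]; exact self_mem_nhdsWithin
    -- the key estimate
    have hest : ∀ t ∈ Set.Ico (0:ℝ) 1, ‖Nf ε t - L‖ ≤ |tail 1 - tail t| := by
      intro t ht
      have hsubI : Set.uIcc (0:ℝ) t ⊆ Set.uIcc (0:ℝ) 1 := by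
        rw [Set.uIcc_of_le ht.1, Set.uIcc_of_le zero_le_one]
        exact Set.Icc_subset_Icc le_rfl ht.2.le
      have hFint_t : IntervalIntegrable F volume 0 t := hFint.mono_set hsubI
      have haf_t : IntervalIntegrable (fun s => (n:ℝ) * (M + g s) * B) volume 0 t :=
        haf1.mono_set hsubI
      have hdiff : Nf ε t - L = -(∫ s in t..(1:ℝ), F s) := by
        rw [hLdef, hFTC ε hε t ht]
        have := intervalIntegral.integral_interval_sub_left hFint hFint_t
        rw [← this]
        abel
      rw [hdiff, norm_neg]
      have htail_eq : tail 1 - tail t = ∫ s in t..(1:ℝ), (n:ℝ) * (M + g s) * B :=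
        intervalIntegral.integral_interval_sub_left haf1 haf_t
      rw [htail_eq]
      refine intervalIntegral.norm_integral_le_abs_of_norm_le ?_ (haf1.mono_set ?_)
      · rw [Set.uIoc_of_le ht.2.le, ← Measure.restrict_congr_set Ioo_ae_eq_Ioc]
        refine (ae_restrict_iff' measurableSet_Ioo).2 (Filter.Eventually.of_forall ?_)
        intro s hs
        exact hFnormG ε hε s ⟨ht.1.trans hs.1.le, hs.2⟩
      · rw [Set.uIcc_of_le ht.2.le, Set.uIcc_of_le zero_le_one]
        exact Set.Icc_subset_Icc ht.1 le_rfl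
    -- the tail tends to zero
    have htail_cont : ContinuousOn tail (Set.uIcc (0:ℝ) 1) :=
      intervalIntegral.continuousOn_primitive_interval' haf1 Set.left_mem_uIcc
    have htail_tend : Filter.Tendsto tail (nhdsWithin 1 (Set.Iio 1)) (nhds (tail 1)) := by
      have h1 : Filter.Tendsto tail (nhdsWithin 1 (Set.uIcc (0:ℝ) 1)) (nhds (tail 1)) :=
        (htail_cont 1 Set.right_mem_uIcc).tendsto
      refine h1.mono_left ?_
      rw [← hIooIio]
      refine nhdsWithin_mono _ ?_
      rw [Set.uIcc_of_le zero_le_one]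
      exact Set.Ioo_subset_Icc_self
    have habs : Filter.Tendsto (fun t => |tail 1 - tail t|) (nhdsWithin 1 (Set.Iio 1))
        (nhds 0) := by
      have h2 : Filter.Tendsto (fun t => tail 1 - tail t) (nhdsWithin 1 (Set.Iio 1))
          (nhds (tail 1 - tail 1)) := tendsto_const_nhds.sub htail_tend
      rw [sub_self] at h2
      simpa using h2.abs
    apply tendsto_iff_norm_sub_tendsto_zero.2
    refine squeeze_zero' (Filter.Eventually.of_forall fun _ => norm_nonneg _) ?_ habs
    refine Filter.eventually_of_mem hIoomem fun t ht => ?_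
    exact hest t ⟨ht.1.le, ht.2⟩
  -- conclusion
  refine ⟨fun ε hε => ⟨hlim ε hε, ⟨B, hbound ε hε⟩⟩, ?_⟩
  -- the perturbation estimate
  have h0I : (0:ℝ) ∈ Set.Icc (0:ℝ) 1 := ⟨le_rfl, zero_le_one⟩
  have hC0 : ∀ s ∈ Set.Icc (0:ℝ) 1, C 0 s = 0 := by
    intro s hs
    have := hCbdd 0 h0I s hs
    exact norm_le_zero_iff.mp this
  refine ⟨(n:ℝ) * B * Real.exp ((n:ℝ) * M) / (1 - δ) + 1,
    add_pos_of_nonneg_of_pos (div_nonneg (by positivity) (by linarith)) one_pos,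
    1, one_pos, ?_⟩
  intro ε hε0 hε1 _ t ht
  have hεI : ε ∈ Set.Icc (0:ℝ) 1 := ⟨hε0, hε1⟩
  have hsub : Set.Icc (0:ℝ) t ⊆ Set.Ico (0:ℝ) 1 :=
    fun s hs => ⟨hs.1, lt_of_le_of_lt hs.2 ht.2⟩
  set clamp : ℝ → ℝ := fun s => max 0 (min s t) with hclampdef
  have hclamp_mem : ∀ s, clamp s ∈ Set.Icc (0:ℝ) t :=
    fun s => ⟨le_max_left _ _, max_le ht.1 (min_le_right s t)⟩
  have hclamp_id : ∀ s ∈ Set.Icc (0:ℝ) t, clamp s = s := by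
    intro s hs
    rw [hclampdef]
    simp only
    rw [min_eq_left hs.2, max_eq_right hs.1]
  have hclamp_cont : Continuous clamp :=
    continuous_const.max (continuous_id.min continuous_const)
  set u : ℝ → ℝ := fun s => ‖Nf ε (clamp s) - Nf 0 (clamp s)‖ with hudef
  have hu : Continuous u := by
    refine Continuous.norm (Continuous.sub ?_ ?_)
    · exact (hNc ε hεI).comp_continuous hclamp_cont fun s => hsub (hclamp_mem s)
    · exact (hNc 0 h0I).comp_continuous hclamp_cont fun s => hsub (hclamp_mem s)
  set cval : ℝ := (n:ℝ) * B * ε * (1 / (1 - δ)) with hcvaldef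
  have hineq : ∀ t' ∈ Set.Icc (0:ℝ) t,
      u t' ≤ cval + ∫ s in (0:ℝ)..t', ((n:ℝ) * M) * u s := by
    intro t' ht'
    have ht'1 : t' ∈ Set.Ico (0:ℝ) 1 := hsub ht'
    have hsub' : Set.Icc (0:ℝ) t' ⊆ Set.Icc (0:ℝ) t := Set.Icc_subset_Icc le_rfl ht'.2
    have hut' : u t' = ‖Nf ε t' - Nf 0 t'‖ := by
      rw [hudef]; simp only; rw [hclamp_id t' ht']
    have hintε : IntervalIntegrable (fun s => (Ktil s + g s • C ε s) * Nf ε s) volume 0 t' := by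
      apply ContinuousOn.intervalIntegrable
      rw [Set.uIcc_of_le ht'.1]
      exact (hFc ε hεI).mono fun x hx => hsub (hsub' hx)
    have hint0 : IntervalIntegrable (fun s => (Ktil s + g s • C 0 s) * Nf 0 s) volume 0 t' := by
      apply ContinuousOn.intervalIntegrable
      rw [Set.uIcc_of_le ht'.1]
      exact (hFc 0 h0I).mono fun x hx => hsub (hsub' hx)
    -- difference representation
    have hdiffrep : Nf ε t' - Nf 0 t' =
        ∫ s in (0:ℝ)..t', ((Ktil s + g s • C ε s) * Nf ε s - (Ktil s + g s • C 0 s) * Nf 0 s) := by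
      rw [hFTC ε hεI t' ht'1, hFTC 0 h0I t' ht'1,
        intervalIntegral.integral_sub hintε hint0]
      abel
    -- pointwise bound on the difference of integrands
    have hpt : ∀ s ∈ Set.Icc (0:ℝ) t',
        ‖(Ktil s + g s • C ε s) * Nf ε s - (Ktil s + g s • C 0 s) * Nf 0 s‖ ≤
          ((n:ℝ) * M) * u s + ((n:ℝ) * B * ε) * g s := by
      intro s hs
      have hsI : s ∈ Set.Ico (0:ℝ) 1 := hsub (hsub' hs)
      have hsI1 : s ∈ Set.Icc (0:ℝ) 1 := ⟨hsI.1, hsI.2.le⟩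
      have hC0s : C 0 s = 0 := hC0 s hsI1
      have hus : u s = ‖Nf ε s - Nf 0 s‖ := by
        rw [hudef]; simp only; rw [hclamp_id s (hsub' hs)]
      have halg : (Ktil s + g s • C ε s) * Nf ε s - (Ktil s + g s • C 0 s) * Nf 0 s =
          Ktil s * (Nf ε s - Nf 0 s) + g s • (C ε s * Nf ε s) := by
        rw [hC0s, smul_zero, add_zero, add_mul, Matrix.smul_mul, mul_sub]
        abel
      rw [halg, hus]
      have hgs : 0 ≤ g s := hgnn s hsI
      calc ‖Ktil s * (Nf ε s - Nf 0 s) + g s • (C ε s * Nf ε s)‖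
          ≤ ‖Ktil s * (Nf ε s - Nf 0 s)‖ + ‖g s • (C ε s * Nf ε s)‖ := norm_add_le _ _
        _ ≤ ((n:ℝ) * M) * ‖Nf ε s - Nf 0 s‖ + ((n:ℝ) * B * ε) * g s := by
            refine add_le_add ?_ ?_
            · calc ‖Ktil s * (Nf ε s - Nf 0 s)‖
                  ≤ (n:ℝ) * ‖Ktil s‖ * ‖Nf ε s - Nf 0 s‖ := mat_mul_norm_le _ _
                _ ≤ ((n:ℝ) * M) * ‖Nf ε s - Nf 0 s‖ := by
                    refine mul_le_mul_of_nonneg_right ?_ (norm_nonneg _)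
                    exact mul_le_mul_of_nonneg_left (hM s hsI1) (Nat.cast_nonneg n)
            · rw [norm_smul, Real.norm_eq_abs, abs_of_nonneg hgs]
              rw [mul_comm (g s) _]
              have hCN : ‖C ε s * Nf ε s‖ ≤ (n:ℝ) * B * ε := by
                calc ‖C ε s * Nf ε s‖
                    ≤ (n:ℝ) * ‖C ε s‖ * ‖Nf ε s‖ := mat_mul_norm_le _ _
                  _ ≤ (n:ℝ) * ε * B := by
                      refine mul_le_mul
                        (mul_le_mul_of_nonneg_left (hCbdd ε hεI s hsI1) (Nat.cast_nonneg n))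
                        (hbound ε hεI s hsI) (norm_nonneg _) (by positivity)
                  _ = (n:ℝ) * B * ε := by ring
              exact mul_le_mul_of_nonneg_right hCN hgs
    -- integral chain
    have hgi : IntervalIntegrable g volume 0 t' :=
      hg_int.mono_set (by
        rw [Set.uIcc_of_le ht'.1, Set.uIcc_of_le zero_le_one]
        exact Set.Icc_subset_Icc le_rfl ht'1.2.le)
    have hint_norm : IntervalIntegrable
        (fun s => ‖(Ktil s + g s • C ε s) * Nf ε s - (Ktil s + g s • C 0 s) * Nf 0 s‖)
        volume 0 t' := (hintε.sub hint0).norm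
    have hint_rhs : IntervalIntegrable
        (fun s => ((n:ℝ) * M) * u s + ((n:ℝ) * B * ε) * g s) volume 0 t' :=
      ((continuous_const.mul hu).intervalIntegrable _ _).add (hgi.const_mul _)
    rw [hut', hdiffrep]
    calc ‖∫ s in (0:ℝ)..t',
            ((Ktil s + g s • C ε s) * Nf ε s - (Ktil s + g s • C 0 s) * Nf 0 s)‖
        ≤ ∫ s in (0:ℝ)..t',
            ‖(Ktil s + g s • C ε s) * Nf ε s - (Ktil s + g s • C 0 s) * Nf 0 s‖ :=
          intervalIntegral.norm_integral_le_integral_norm ht'.1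
      _ ≤ ∫ s in (0:ℝ)..t', (((n:ℝ) * M) * u s + ((n:ℝ) * B * ε) * g s) :=
          intervalIntegral.integral_mono_on ht'.1 hint_norm hint_rhs hpt
      _ = (∫ s in (0:ℝ)..t', ((n:ℝ) * M) * u s) + ((n:ℝ) * B * ε) * ∫ s in (0:ℝ)..t', g s := by
          rw [intervalIntegral.integral_add (f := fun s => ((n:ℝ) * M) * u s) (g := fun s => ((n:ℝ) * B * ε) * g s) ((continuous_const.mul hu).intervalIntegrable _ _)
            (hgi.const_mul _)]
          congr 1
          exact intervalIntegral.integral_const_mul _ _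
      _ ≤ (∫ s in (0:ℝ)..t', ((n:ℝ) * M) * u s) + cval := by
          refine add_le_add_right ?_ _
          rw [hcvaldef]
          exact mul_le_mul_of_nonneg_left (hg_ibound t' ht'1)
            (mul_nonneg (mul_nonneg (Nat.cast_nonneg n) hBpos.le) hε0)
      _ = cval + ∫ s in (0:ℝ)..t', ((n:ℝ) * M) * u s := by ring
  -- apply Gronwall
  have hgr := gronwall_int hu continuous_const (fun _ => by positivity) hineq t ⟨ht.1, le_rfl⟩
  have hut : u t = ‖Nf ε t - Nf 0 t‖ := by
    rw [hudef]; simp only; rw [hclamp_id t ⟨ht.1, le_rfl⟩]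
  rw [hut] at hgr
  refine hgr.trans ?_
  rw [intervalIntegral.integral_const]
  have hexp : Real.exp ((t - 0) • ((n:ℝ) * M)) ≤ Real.exp ((n:ℝ) * M) := by
    apply Real.exp_le_exp.mpr
    simp only [sub_zero, smul_eq_mul]
    have hnM : (0:ℝ) ≤ (n:ℝ) * M := mul_nonneg (Nat.cast_nonneg n) hM0
    nlinarith [ht.1, ht.2.le, hnM]
  have hcv0 : 0 ≤ cval := by
    rw [hcvaldef]
    have h1δ : (0:ℝ) ≤ 1 / (1 - δ) := by
      apply div_nonneg zero_le_one
      linarith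
    exact mul_nonneg (mul_nonneg (mul_nonneg (Nat.cast_nonneg n) hBpos.le) hε0) h1δ
  calc cval * Real.exp ((t - 0) • ((n:ℝ) * M))
      ≤ cval * Real.exp ((n:ℝ) * M) := mul_le_mul_of_nonneg_left hexp hcv0
    _ = ((n:ℝ) * B * Real.exp ((n:ℝ) * M) / (1 - δ)) * ε := by
        rw [hcvaldef]; field_simp
    _ ≤ ((n:ℝ) * B * Real.exp ((n:ℝ) * M) / (1 - δ) + 1) * ε := by
        refine mul_le_mul_of_nonneg_right ?_ hε0
        linarith
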